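/- Let f, g be measurable functions from a σ-finite measure space Ω into F^n. Then the following are equivalent: (i) g(x) ∈ K(f)(x) for a.e. x; (ii) |g(x)·u| ≤ |f(x)·u| for a.e. x, for every u ∈ F^n; (iii) g = h·f for some measurable scalar function h with |h| ≤ 1 a.e. -/

import Mathlib

open MeasureTheory

lemma pointwise_key {𝕜 : Type*} [RCLike 𝕜] {E : Type*} [NormedAddCommGroup E]
    [InnerProductSpace 𝕜 E] {v w : E}
    (h : ∀ u : E, ‖(inner 𝕜 w u : 𝕜)‖ ≤ ‖(inner 𝕜 v u : 𝕜)‖) :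
    ∃ c : 𝕜, ‖c‖ ≤ 1 ∧ w = c • v := by
  by_cases hv : v = 0
  · refine ⟨0, by simp, ?_⟩
    have h0 : (inner 𝕜 w w : 𝕜) = 0 :=
      norm_le_zero_iff.mp (by simpa [hv, inner_zero_left] using h w)
    simpa [hv] using inner_self_eq_zero.mp h0
  · set c : 𝕜 := (inner 𝕜 v w : 𝕜) / (‖v‖ : 𝕜) ^ 2 with hc
    have hv2 : ((‖v‖ : 𝕜) ^ 2) ≠ 0 := by simp [hv, norm_eq_zero]
    set w' : E := w - c • v with hw'
    have hvw' : (inner 𝕜 v w' : 𝕜) = 0 := by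
      simp [hw', inner_sub_right, inner_smul_right, hc, inner_self_eq_norm_sq_to_K,
        div_mul_cancel₀ _ hv2]
    have hww' : (inner 𝕜 w w' : 𝕜) = (inner 𝕜 w' w' : 𝕜) := by
      have hwd : w = w' + c • v := by simp [hw']
      rw [hwd, inner_add_left, inner_smul_left]
      simp [hvw']
    have hle := h w'
    rw [hww', hvw'] at hle
    simp only [norm_zero] at hle
    have hw0 : w' = 0 := inner_self_eq_zero.mp (norm_le_zero_iff.mp hle)
    have hwcv : w = c • v := by rwa [hw', sub_eq_zero] at hw0
    refine ⟨c, ?_, hwcv⟩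
    have hcv := h v
    rw [hwcv, inner_smul_left, inner_self_eq_norm_sq_to_K, norm_mul, RCLike.norm_conj] at hcv
    have hn : (0:ℝ) < ‖((‖v‖:𝕜)^2)‖ := norm_pos_iff.mpr hv2
    exact (mul_le_mul_iff_of_pos_right hn).mp (by rw [one_mul]; exact hcv)

/-- Let `f, g` be measurable functions from a σ-finite measure space `Ω` into
`𝔽ⁿ`. The following are equivalent:
(i) `g x ∈ 𝒦(f)(x) = {c • f x : ‖c‖ ≤ 1}` for a.e. `x`;
(ii) for every `u ∈ 𝔽ⁿ`, `|g(x)·u| ≤ |f(x)·u|` for a.e. `x`;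
(iii) `g = h • f` a.e. for some measurable scalar function `h` with `‖h‖ ≤ 1` a.e. -/
theorem stmt2 {𝕜 : Type*} [RCLike 𝕜] {n : ℕ}
    [MeasurableSpace (EuclideanSpace 𝕜 (Fin n))] [BorelSpace (EuclideanSpace 𝕜 (Fin n))]
    {Ω : Type*} [MeasurableSpace Ω] (μ : Measure Ω) [SigmaFinite μ]
    (f g : Ω → EuclideanSpace 𝕜 (Fin n)) (hf : Measurable f) (hg : Measurable g) :
    List.TFAE [
      ∀ᵐ x ∂μ, ∃ c : 𝕜, ‖c‖ ≤ 1 ∧ g x = c • f x,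
      ∀ u : EuclideanSpace 𝕜 (Fin n),
        ∀ᵐ x ∂μ, ‖(inner 𝕜 (g x) u : 𝕜)‖ ≤ ‖(inner 𝕜 (f x) u : 𝕜)‖,
      ∃ h : Ω → 𝕜, Measurable h ∧ (∀ᵐ x ∂μ, ‖h x‖ ≤ 1) ∧ ∀ᵐ x ∂μ, g x = h x • f x ] := by
  tfae_have 1 → 3 := by
    intro h1
    refine ⟨fun x => (inner 𝕜 (f x) (g x) : 𝕜) / (‖f x‖ : 𝕜) ^ 2, ?_, ?_, ?_⟩
    · exact (Measurable.inner hf hg).div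
        (((RCLike.measurable_ofReal).comp hf.norm).pow measurable_const)
    · filter_upwards [h1] with x hx
      obtain ⟨c, hc, hgc⟩ := hx
      by_cases hfx : f x = 0
      · simp [hfx]
      · have hne : ((‖f x‖ : 𝕜) ^ 2) ≠ 0 := by simp [hfx, norm_eq_zero]
        rw [hgc, inner_smul_right, inner_self_eq_norm_sq_to_K, mul_div_assoc,
          div_self hne, mul_one]
        exact hc
    · filter_upwards [h1] with x hx
      obtain ⟨c, hc, hgc⟩ := hx
      by_cases hfx : f x = 0
      · simp [hfx, hgc]
      · have hne : ((‖f x‖ : 𝕜) ^ 2) ≠ 0 := by simp [hfx, norm_eq_zero]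
        rw [hgc, inner_smul_right, inner_self_eq_norm_sq_to_K, mul_div_assoc,
          div_self hne, mul_one]
  tfae_have 3 → 2 := by
    rintro ⟨h, hm, hb, heq⟩ u
    filter_upwards [hb, heq] with x h1 h2
    rw [h2, inner_smul_left, norm_mul, RCLike.norm_conj]
    calc ‖h x‖ * ‖(inner 𝕜 (f x) u : 𝕜)‖ ≤ 1 * ‖(inner 𝕜 (f x) u : 𝕜)‖ :=
          mul_le_mul_of_nonneg_right h1 (norm_nonneg _)
    _ = ‖(inner 𝕜 (f x) u : 𝕜)‖ := one_mul _
  tfae_have 2 → 1 := by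
    intro h2
    obtain ⟨s, hsc, hsd⟩ :=
      TopologicalSpace.exists_countable_dense (EuclideanSpace 𝕜 (Fin n))
    have hae : ∀ᵐ x ∂μ, ∀ u ∈ s, ‖(inner 𝕜 (g x) u : 𝕜)‖ ≤ ‖(inner 𝕜 (f x) u : 𝕜)‖ :=
      (ae_ball_iff hsc).2 (fun u _ => h2 u)
    filter_upwards [hae] with x hx
    apply pointwise_key
    intro u
    have hcl : IsClosed {u : EuclideanSpace 𝕜 (Fin n) |
        ‖(inner 𝕜 (g x) u : 𝕜)‖ ≤ ‖(inner 𝕜 (f x) u : 𝕜)‖} :=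
      isClosed_le ((Continuous.inner continuous_const continuous_id).norm)
        ((Continuous.inner continuous_const continuous_id).norm)
    have hsub : s ⊆ {u : EuclideanSpace 𝕜 (Fin n) |
        ‖(inner 𝕜 (g x) u : 𝕜)‖ ≤ ‖(inner 𝕜 (f x) u : 𝕜)‖} := fun u hu => hx u hu
    exact hcl.closure_subset_iff.2 hsub (hsd u)
  tfae_finish
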